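/- Let x_1 be a simplicial vertex of a graph G with closed neighborhood N_G[x_1] = B. Then for all r ≥ 1, (I(G)^{(r)} : x_B) = I(G)^{(r − |B| + 1)}, where x_B is the product of the variables in B and I(G)^{(k)} = S when k ≤ 0. -/

import Mathlib

open MvPolynomial

noncomputable section

namespace EdgeIdealReg

open scoped Classical

/-- The edge ideal of a simple graph, in the polynomial ring with variables the vertices. -/
def edgeIdeal (K : Type) [Field K] {V : Type} (G : SimpleGraph V) :
    Ideal (MvPolynomial V K) :=
  Ideal.span { p | ∃ u v : V, G.Adj u v ∧ p = X u * X v }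

/-- The edge ideal of the induced subgraph on a set `s` of vertices, viewed inside the
polynomial ring of the ambient graph (extra variables do not change the regularity). -/
def edgeIdealOn (K : Type) [Field K] {V : Type} (G : SimpleGraph V) (s : Set V) :
    Ideal (MvPolynomial V K) :=
  Ideal.span { p | ∃ u v : V, G.Adj u v ∧ u ∈ s ∧ v ∈ s ∧ p = X u * X v }

/-- The `r`-th symbolic power of an ideal: the intersection over all minimal primes `p` of `I`
of the contraction of `I^r` localized at `p`; concretely,
`f ∈ I^{(r)}` iff for every minimal prime `p` of `I` there is `s ∉ p` with `s * f ∈ I ^ r`. -/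
def symbolicPower {R : Type} [CommRing R] (I : Ideal R) (r : ℕ) : Ideal R where
  carrier := { f | ∀ p ∈ I.minimalPrimes, ∃ s, s ∉ p ∧ s * f ∈ I ^ r }
  zero_mem' := by
    intro p hp
    exact ⟨1, (Ideal.ne_top_iff_one p).mp hp.1.1.ne_top, by simp⟩
  add_mem' := by
    intro a b ha hb p hp
    obtain ⟨s, hs, hsa⟩ := ha p hp
    obtain ⟨t, ht, htb⟩ := hb p hp
    refine ⟨s * t, fun h => ?_, ?_⟩
    · rcases hp.1.1.mem_or_mem h with h' | h'
      · exact hs h'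
      · exact ht h'
    · have : s * t * (a + b) = t * (s * a) + s * (t * b) := by ring
      rw [this]
      exact Ideal.add_mem _ (Ideal.mul_mem_left _ _ hsa) (Ideal.mul_mem_left _ _ htb)
  smul_mem' := by
    intro c f hf p hp
    obtain ⟨s, hs, hsf⟩ := hf p hp
    refine ⟨s, hs, ?_⟩
    have : s * (c • f) = c * (s * f) := by
      simp only [smul_eq_mul]; ring
    rw [this]
    exact Ideal.mul_mem_left _ _ hsf

/-- Symbolic power with an integer exponent, with the convention `I^{(k)} = S` for `k ≤ 0`. -/
def symbolicPowerZ {R : Type} [CommRing R] (I : Ideal R) (k : ℤ) : Ideal R :=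
  if k ≤ 0 then ⊤ else symbolicPower I k.toNat

/-- A graded free resolution of `S/I` over the polynomial ring `S = K[x_v]`:
`⋯ → F_{i+1} → F_i → ⋯ → F_0 = S → S/I → 0`, where `F_i` is a graded free module with
basis elements of degrees `deg i k`, the differentials are given by matrices of homogeneous
polynomials of the appropriate degrees, the image of `F_1 → F_0 = S` is `I`, and the
complex is exact in positive homological degrees. -/
structure GradedFreeResolution {K : Type} [Field K] {σ : Type}
    (I : Ideal (MvPolynomial σ K)) where
  rank : ℕ → ℕ
  deg : (i : ℕ) → Fin (rank i) → ℕ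
  rank_zero : rank 0 = 1
  deg_zero : ∀ k, deg 0 k = 0
  mat : (i : ℕ) → Matrix (Fin (rank i)) (Fin (rank (i + 1))) (MvPolynomial σ K)
  homog : ∀ i k j, mat i k j = 0 ∨
    ∃ e, deg (i + 1) j = deg i k + e ∧ (mat i k j).IsHomogeneous e
  range_zero : ∀ f : MvPolynomial σ K,
    f ∈ I ↔ (fun _ => f) ∈ LinearMap.range (Matrix.mulVecLin (mat 0))
  isExact : ∀ i, LinearMap.ker (Matrix.mulVecLin (mat i)) =
    LinearMap.range (Matrix.mulVecLin (mat (i + 1)))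

/-- The Castelnuovo–Mumford regularity of the quotient `S/I` for a homogeneous ideal `I` of
the polynomial ring: the least `d` such that some graded free resolution of `S/I` has all its
`i`-th syzygies generated in degrees `≤ d + i` (the minimal free resolution realizes the
infimum).  By convention `reg (S/S) = ⊥ = -∞`. -/

def regQuot {K : Type} [Field K] {σ : Type} (I : Ideal (MvPolynomial σ K)) : WithBot ℤ :=
  if I = ⊤ then ⊥
  else ((sInf { d : ℤ | ∃ F : GradedFreeResolution I,
      ∀ i (k : Fin (F.rank i)), (F.deg i k : ℤ) ≤ d + i } : ℤ) : WithBot ℤ)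

/-- A set of edges of `G` that forms a matching: pairwise disjoint edges. -/
def IsMatchingSet {V : Type} (G : SimpleGraph V) (M : Finset (Sym2 V)) : Prop :=
  (M : Set (Sym2 V)) ⊆ G.edgeSet ∧
    (M : Set (Sym2 V)).Pairwise fun e f => ∀ v, v ∈ e → v ∉ f

/-- An induced matching: a matching such that no two of its edges are joined by an edge
of `G`, i.e. it is the edge set of an induced subgraph. -/
def IsInducedMatchingSet {V : Type} (G : SimpleGraph V) (M : Finset (Sym2 V)) : Prop :=
  IsMatchingSet G M ∧
    (M : Set (Sym2 V)).Pairwise fun e f => ∀ u v, u ∈ e → v ∈ f → ¬G.Adj u v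

/-- The matching number `mat(G)`. -/
def matchingNumber {V : Type} (G : SimpleGraph V) : ℕ :=
  sSup { n | ∃ M, IsMatchingSet G M ∧ M.card = n }

/-- The induced matching number `ν(G)`. -/
def inducedMatchingNumber {V : Type} (G : SimpleGraph V) : ℕ :=
  sSup { n | ∃ M, IsInducedMatchingSet G M ∧ M.card = n }

/-- `G` has an induced cycle of length `n`. -/
def HasInducedCycle {V : Type} (G : SimpleGraph V) (n : ℕ) : Prop :=
  ∃ f : ZMod n → V, Function.Injective f ∧
    ∀ i j : ZMod n, G.Adj (f i) (f j) ↔ (j = i + 1 ∨ i = j + 1)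

/-- A graph is chordal if every induced cycle has length `3`. -/
def Chordal {V : Type} (G : SimpleGraph V) : Prop :=
  ∀ n, 4 ≤ n → ¬HasInducedCycle G n

/-- A graph is weakly chordal if every induced cycle in `G` and in `Gᶜ` has length at most 4. -/
def WeaklyChordal {V : Type} (G : SimpleGraph V) : Prop :=
  (∀ n, 5 ≤ n → ¬HasInducedCycle G n) ∧ ∀ n, 5 ≤ n → ¬HasInducedCycle Gᶜ n

/-- The co-chordal cover number `cochord(G)`: the least `n` such that `n` co-chordal
subgraphs of `G` cover all the edges of `G`. -/
def cochordNumber {V : Type} (G : SimpleGraph V) : ℕ :=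
  sInf { n | ∃ H : Fin n → SimpleGraph V,
    (∀ i, H i ≤ G ∧ Chordal (H i)ᶜ) ∧ ∀ e ∈ G.edgeSet, ∃ i, e ∈ (H i).edgeSet }

/-- A graph is unicyclic if it contains exactly one cycle. -/
def Unicyclic {V : Type} (G : SimpleGraph V) : Prop :=
  ∃ (v : V) (c : G.Walk v v), c.IsCycle ∧
    ∀ (w : V) (c' : G.Walk w w), c'.IsCycle → { e | e ∈ c'.edges } = { e | e ∈ c.edges }

/-- Data exhibiting `G` as the graph `H_T` obtained from the induced subgraph on `Hset`
by attaching, at each vertex of `T ⊆ Hset`, a union of complete graphs having that vertex as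
their only common vertex: a family of cliques `C i` of `G`, each meeting `Hset` exactly in
its attachment vertex `a i ∈ T`, two distinct cliques meeting in at most the common
attachment vertex, together covering all vertices outside `Hset`, and all edges of `G`
lying either inside `Hset` or inside one of the cliques. -/
structure CliqueAttachment {V : Type} (G : SimpleGraph V) (Hset T : Set V) where
  ι : Type
  C : ι → Finset V
  a : ι → V
  a_mem_T : ∀ i, a i ∈ T
  T_sub : T ⊆ Hset
  inter_H : ∀ i, (C i : Set V) ∩ Hset = {a i}
  a_mem_C : ∀ i, a i ∈ C i
  clique : ∀ i, G.IsClique (C i)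
  pairwise_inter : ∀ i j, i ≠ j → (C i : Set V) ∩ (C j : Set V) ⊆ ({a i} : Set V)
  cover : Hset ∪ (⋃ i, (C i : Set V)) = Set.univ
  edges_sub : ∀ u v, G.Adj u v → (u ∈ Hset ∧ v ∈ Hset) ∨ ∃ i, u ∈ C i ∧ v ∈ C i

end EdgeIdealReg


namespace SCProof

open scoped Classical
set_option linter.unusedSectionVars false

variable {V K : Type} [Field K] [Fintype V] [DecidableEq V]

/-- C-degree of an exponent vector. -/
def cdeg (C : Set V) (m : V →₀ ℕ) : ℕ := ∑ v ∈ Finset.univ, if v ∈ C then m v else 0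

lemma cdeg_add (C : Set V) (a b : V →₀ ℕ) : cdeg C (a + b) = cdeg C a + cdeg C b := by
  classical
  simp only [cdeg, Finsupp.add_apply, ← Finset.sum_add_distrib]
  refine Finset.sum_congr rfl fun v _ => by split <;> simp

lemma cdeg_single (C : Set V) (v : V) :
    cdeg C (Finsupp.single v 1) = if v ∈ C then 1 else 0 := by
  classical
  rw [cdeg, Finset.sum_eq_single v]
  · simp
  · intro b _ hb
    simp [Finsupp.single_apply, Ne.symm hb]
  · simp

/-- The ideal of polynomials all of whose monomials have `C`-degree at least `k`. -/
def Jdeg (C : Set V) (k : ℕ) : Ideal (MvPolynomial V K) where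
  carrier := { f | ∀ m ∈ f.support, k ≤ cdeg C m }
  zero_mem' := by simp
  add_mem' := by
    intro a b ha hb m hm
    rcases Finset.mem_union.mp (MvPolynomial.support_add hm) with h | h
    · exact ha m h
    · exact hb m h
  smul_mem' := by
    intro c f hf m hm
    have := MvPolynomial.support_mul c f hm
    rcases Finset.mem_add.mp this with ⟨a, ha, b, hb, rfl⟩
    have := hf b hb
    rw [cdeg_add]; omega

lemma mem_Jdeg {C : Set V} {k : ℕ} {f : MvPolynomial V K} :
    f ∈ Jdeg (K := K) C k ↔ ∀ m ∈ f.support, k ≤ cdeg C m := Iff.rfl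

/-- The prime generated by the variables in `C`. -/
def Pc (K : Type) [Field K] (C : Set V) : Ideal (MvPolynomial V K) :=
  Ideal.span ((fun v => (X v : MvPolynomial V K)) '' C)

lemma X_mem_Pc {C : Set V} {v : V} (hv : v ∈ C) : (X v : MvPolynomial V K) ∈ Pc K C :=
  Ideal.subset_span ⟨v, hv, rfl⟩

lemma Pc_le_Jdeg_one (C : Set V) : Pc K C ≤ Jdeg (K := K) C 1 := by
  rw [Pc, Ideal.span_le]
  rintro _ ⟨v, hv, rfl⟩ m hm
  rw [MvPolynomial.support_X] at hm
  rw [Finset.mem_singleton.mp hm, cdeg_single, if_pos hv]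

lemma Jdeg_mul (C : Set V) (a b : ℕ) :
    Jdeg (K := K) C a * Jdeg (K := K) C b ≤ Jdeg (K := K) C (a + b) := by
  rw [Ideal.mul_le]
  intro f hf g hg m hm
  rcases Finset.mem_add.mp (MvPolynomial.support_mul f g hm) with ⟨x, hx, y, hy, rfl⟩
  rw [cdeg_add]
  exact add_le_add (hf x hx) (hg y hy)

lemma pow_Pc_le_Jdeg (C : Set V) (k : ℕ) : Pc K C ^ k ≤ Jdeg (K := K) C k := by
  induction k with
  | zero => intro f _; intro m _; omega
  | succ n ih =>
      rw [pow_succ]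
      calc Pc K C ^ n * Pc K C ≤ Jdeg (K := K) C n * Jdeg (K := K) C 1 :=
            Ideal.mul_mono ih (Pc_le_Jdeg_one C)
        _ ≤ Jdeg (K := K) C (n + 1) := Jdeg_mul C n 1

lemma monomial_mem_pow {C : Set V} :
    ∀ (k : ℕ) (m : V →₀ ℕ) (c : K), k ≤ cdeg C m → monomial m c ∈ Pc K C ^ k := by
  intro k
  induction k with
  | zero => intro m c _; simp
  | succ n ih =>
      intro m c hk
      have hex : ∃ v ∈ C, m v ≠ 0 := by
        by_contra hall
        push_neg at hall
        have : cdeg C m = 0 := Finset.sum_eq_zero fun v _ => by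
          by_cases hv : v ∈ C
          · simp [hv, hall v hv]
          · simp [hv]
        omega
      obtain ⟨v, hvC, hv⟩ := hex
      have hle : Finsupp.single v 1 ≤ m := by
        rw [Finsupp.single_le_iff]; omega
      have hdecomp : m = Finsupp.single v 1 + (m - Finsupp.single v 1) :=
        (add_tsub_cancel_of_le hle).symm
      have hdeg : cdeg C m = 1 + cdeg C (m - Finsupp.single v 1) := by
        conv_lhs => rw [hdecomp]
        rw [cdeg_add, cdeg_single, if_pos hvC]
      have hmem : monomial (m - Finsupp.single v 1) c ∈ Pc K C ^ n := ih _ _ (by omega)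
      have : monomial m c = X v * monomial (m - Finsupp.single v 1) c := by
        rw [MvPolynomial.X, MvPolynomial.monomial_mul, one_mul, ← hdecomp]
      rw [this, pow_succ, mul_comm (X v)]
      exact Ideal.mul_mem_mul hmem (X_mem_Pc hvC)

lemma Jdeg_le_pow (C : Set V) (k : ℕ) : Jdeg (K := K) C k ≤ Pc K C ^ k := by
  intro f hf
  rw [f.as_sum]
  exact Ideal.sum_mem _ fun m hm => monomial_mem_pow k m _ (hf m hm)

lemma pow_Pc_eq (C : Set V) (k : ℕ) : Pc K C ^ k = Jdeg (K := K) C k :=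
  le_antisymm (pow_Pc_le_Jdeg C k) (Jdeg_le_pow C k)

lemma X_not_mem_Pc {C : Set V} {v : V} (hv : v ∉ C) : (X v : MvPolynomial V K) ∉ Pc K C := by
  intro h
  have := Pc_le_Jdeg_one C h (Finsupp.single v 1) (by rw [MvPolynomial.support_X]; simp)
  rw [cdeg_single, if_neg hv] at this
  omega

lemma sel_coeff (f : MvPolynomial V K) (T : Finset (V →₀ ℕ)) (m : V →₀ ℕ) :
    MvPolynomial.coeff m (∑ a ∈ T, (monomial a (MvPolynomial.coeff a f) : MvPolynomial V K)) =
      if m ∈ T then MvPolynomial.coeff m f else 0 := by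
  classical
  rw [MvPolynomial.coeff_sum]
  simp only [MvPolynomial.coeff_monomial]
  rw [Finset.sum_ite_eq' T m (fun a => MvPolynomial.coeff a f)]

/-- Saturation: if `s` has a monomial of `C`-degree `0` and `s * f ∈ Jdeg C n`,
then `f ∈ Jdeg C n`. -/
lemma mul_mem_Jdeg_cancel {C : Set V} {s f : MvPolynomial V K} {n : ℕ}
    (hs : s ∉ Jdeg (K := K) C 1) (h : s * f ∈ Jdeg (K := K) C n) :
    f ∈ Jdeg (K := K) C n := by
  classical
  by_contra hf
  rw [mem_Jdeg] at hf hs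
  push_neg at hf hs
  obtain ⟨a₀, ha₀s, ha₀⟩ := hs
  have ha₀0 : cdeg C a₀ = 0 := by omega
  obtain ⟨mbad, hmbad, hmbadlt⟩ := hf
  have hfne : f ≠ 0 := fun h0 => by simp [h0] at hmbad
  have hDne : (f.support.image (cdeg C)).Nonempty :=
    Finset.Nonempty.image (by rwa [Finset.nonempty_iff_ne_empty, Ne,
      MvPolynomial.support_eq_empty]) _
  set d := (f.support.image (cdeg C)).min' hDne with hd
  have hmin : ∀ m ∈ f.support, d ≤ cdeg C m := fun m hm =>
    Finset.min'_le _ _ (Finset.mem_image_of_mem _ hm)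
  have hdlt : d < n := lt_of_le_of_lt (hmin _ hmbad) hmbadlt
  set Ts := s.support.filter (fun a => cdeg C a = 0) with hTs
  set Tf := f.support.filter (fun a => cdeg C a = d) with hTf
  set s0 : MvPolynomial V K := ∑ a ∈ Ts, monomial a (MvPolynomial.coeff a s) with hs0def
  set f0 : MvPolynomial V K := ∑ a ∈ Tf, monomial a (MvPolynomial.coeff a f) with hf0def
  have hs0c : ∀ m, MvPolynomial.coeff m s0 = if m ∈ Ts then MvPolynomial.coeff m s else 0 :=
    fun m => sel_coeff s Ts m
  have hf0c : ∀ m, MvPolynomial.coeff m f0 = if m ∈ Tf then MvPolynomial.coeff m f else 0 :=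
    fun m => sel_coeff f Tf m
  have hs0ne : s0 ≠ 0 := by
    intro h0
    have := hs0c a₀
    rw [h0] at this
    simp only [MvPolynomial.coeff_zero] at this
    rw [if_pos (Finset.mem_filter.mpr ⟨ha₀s, ha₀0⟩)] at this
    exact (MvPolynomial.mem_support_iff.mp ha₀s) this.symm
  have hf0ne : f0 ≠ 0 := by
    obtain ⟨md, hmd, hmdeq⟩ := Finset.mem_image.mp (Finset.min'_mem _ hDne)
    intro h0
    have := hf0c md
    rw [h0] at this
    simp only [MvPolynomial.coeff_zero] at this
    rw [if_pos (Finset.mem_filter.mpr ⟨hmd, hmdeq⟩)] at this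
    exact (MvPolynomial.mem_support_iff.mp hmd) this.symm
  obtain ⟨m, hm⟩ := Finset.nonempty_iff_ne_empty.mpr
    (fun h0 => (mul_ne_zero hs0ne hf0ne) (MvPolynomial.support_eq_empty.mp h0))
  -- m is in the support of s0 * f0
  have hsupps0 : s0.support ⊆ Ts := by
    intro a ha
    have := hs0c a
    by_contra hna
    rw [if_neg hna] at this
    exact MvPolynomial.mem_support_iff.mp ha this
  have hsuppf0 : f0.support ⊆ Tf := by
    intro a ha
    have := hf0c a
    by_contra hna
    rw [if_neg hna] at this
    exact MvPolynomial.mem_support_iff.mp ha this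
  have hmdeg : cdeg C m = d := by
    rcases Finset.mem_add.mp (MvPolynomial.support_mul s0 f0 hm) with ⟨x, hx, y, hy, rfl⟩
    have hx' := Finset.mem_filter.mp (hsupps0 hx)
    have hy' := Finset.mem_filter.mp (hsuppf0 hy)
    rw [cdeg_add, hx'.2, hy'.2, zero_add]
  have hcoeff : MvPolynomial.coeff m (s * f) = MvPolynomial.coeff m (s0 * f0) := by
    rw [MvPolynomial.coeff_mul, MvPolynomial.coeff_mul]
    refine Finset.sum_congr rfl ?_
    rintro ⟨a, b⟩ hab
    have habm : a + b = m := Finset.HasAntidiagonal.mem_antidiagonal.mp hab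
    simp only
    by_cases hbf : b ∈ f.support
    · have hbd : d ≤ cdeg C b := hmin b hbf
      have : cdeg C a + cdeg C b = d := by rw [← cdeg_add, habm, hmdeg]
      have ha0 : cdeg C a = 0 := by omega
      have hbd' : cdeg C b = d := by omega
      rw [hs0c, hf0c]
      by_cases has : a ∈ s.support
      · rw [if_pos (Finset.mem_filter.mpr ⟨has, ha0⟩),
          if_pos (Finset.mem_filter.mpr ⟨hbf, hbd'⟩)]
      · rw [MvPolynomial.notMem_support_iff.mp has, zero_mul,
          if_neg (fun hc => has (Finset.mem_filter.mp hc).1), zero_mul]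
    · rw [MvPolynomial.notMem_support_iff.mp hbf, mul_zero, hs0c, hf0c,
        if_neg (fun hc => hbf (Finset.mem_filter.mp hc).1), mul_zero]
  have hmsf : m ∈ (s * f).support := by
    rw [MvPolynomial.mem_support_iff, hcoeff]
    exact MvPolynomial.mem_support_iff.mp hm
  have := h m hmsf
  omega

/-- The algebra map killing the variables in `C`. -/
def collapse (K : Type) [Field K] (C : Set V) : MvPolynomial V K →ₐ[K] MvPolynomial V K :=
  aeval (fun v => if v ∈ C then 0 else X v)

lemma collapse_monomial_pos {C : Set V} {m : V →₀ ℕ} (hm : 1 ≤ cdeg C m) (c : K) :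
    collapse K C (monomial m c) = 0 := by
  classical
  rw [collapse, aeval_monomial]
  have hex : ∃ v ∈ C, m v ≠ 0 := by
    by_contra hall
    push_neg at hall
    have : cdeg C m = 0 := Finset.sum_eq_zero fun v _ => by
      by_cases hv : v ∈ C
      · simp [hv, hall v hv]
      · simp [hv]
    omega
  obtain ⟨v, hvC, hv⟩ := hex
  have : m.prod (fun i k => (if i ∈ C then 0 else X i : MvPolynomial V K) ^ k) = 0 := by
    rw [Finsupp.prod]
    refine Finset.prod_eq_zero (Finsupp.mem_support_iff.mpr hv) ?_
    rw [if_pos hvC, zero_pow hv]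
  rw [this, mul_zero]

lemma collapse_monomial_zero {C : Set V} {m : V →₀ ℕ} (hm : cdeg C m = 0) (c : K) :
    collapse K C (monomial m c) = monomial m c := by
  classical
  rw [collapse, aeval_monomial]
  have hall : ∀ v ∈ C, m v = 0 := by
    intro v hv
    by_contra hne
    have h1 : 1 ≤ cdeg C m := by
      rw [cdeg]
      calc 1 ≤ (if v ∈ C then m v else 0) := by rw [if_pos hv]; omega
        _ ≤ _ := Finset.single_le_sum (f := fun v => if v ∈ C then m v else 0)
            (fun _ _ => by positivity) (Finset.mem_univ v)
    omega
  have : m.prod (fun i k => (if i ∈ C then 0 else X i : MvPolynomial V K) ^ k) =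
      m.prod (fun i k => (X i : MvPolynomial V K) ^ k) := by
    refine Finsupp.prod_congr ?_
    intro v hv
    rw [if_neg]
    intro hvC
    exact Finsupp.mem_support_iff.mp hv (hall v hvC)
  rw [this, MvPolynomial.monomial_eq]
  rfl

lemma Pc_eq_ker (C : Set V) : Pc K C = RingHom.ker (collapse K C) := by
  classical
  apply le_antisymm
  · rw [Pc, Ideal.span_le]
    rintro _ ⟨v, hv, rfl⟩
    rw [SetLike.mem_coe, RingHom.mem_ker]
    show collapse K C (X v) = 0
    rw [collapse, aeval_X, if_pos hv]
  · intro f hf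
    rw [RingHom.mem_ker] at hf
    have hsplit := Finset.sum_filter_add_sum_filter_not f.support
      (fun m => cdeg C m = 0) (fun m => (monomial m (MvPolynomial.coeff m f) : MvPolynomial V K))
    have hcol : collapse K C f =
        ∑ m ∈ f.support.filter (fun m => cdeg C m = 0), monomial m (MvPolynomial.coeff m f) := by
      conv_lhs => rw [f.as_sum]
      rw [map_sum, ← Finset.sum_filter_add_sum_filter_not f.support (fun m => cdeg C m = 0)
        (fun m => collapse K C (monomial m (MvPolynomial.coeff m f)))]
      rw [Finset.sum_congr rfl (fun m hm =>
          collapse_monomial_zero (Finset.mem_filter.mp hm).2 (MvPolynomial.coeff m f)),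
        Finset.sum_eq_zero (fun m hm => collapse_monomial_pos
          (by have := (Finset.mem_filter.mp hm).2; omega) (MvPolynomial.coeff m f)),
        add_zero]
    have hzero : ∑ m ∈ f.support.filter (fun m => cdeg C m = 0),
        (monomial m (MvPolynomial.coeff m f) : MvPolynomial V K) = 0 := by
      rw [← hcol, hf]
    have : f = ∑ m ∈ f.support.filter (fun m => ¬ cdeg C m = 0),
        monomial m (MvPolynomial.coeff m f) := by
      conv_lhs => rw [f.as_sum]
      rw [← Finset.sum_filter_add_sum_filter_not f.support (fun m => cdeg C m = 0)
        (fun m => (monomial m (MvPolynomial.coeff m f) : MvPolynomial V K)), hzero, zero_add]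
    rw [this]
    refine Ideal.sum_mem _ fun m hm => ?_
    have := (Finset.mem_filter.mp hm).2
    have h1 : monomial m (MvPolynomial.coeff m f) ∈ Pc K C ^ 1 :=
      monomial_mem_pow 1 m _ (by omega)
    rwa [pow_one] at h1

lemma Pc_prime (C : Set V) : (Pc K C).IsPrime := by
  rw [Pc_eq_ker]
  exact RingHom.ker_isPrime _

end SCProof

namespace SCProof2
open EdgeIdealReg SCProof
open scoped Classical
set_option linter.unusedSectionVars false
variable {V K : Type} [Field K] [Fintype V] [DecidableEq V]

lemma pow_mono {R} [CommRing R] {I J : Ideal R} (h : I ≤ J) (n : ℕ) : I ^ n ≤ J ^ n := by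
  induction n with
  | zero => simp
  | succ n ih => rw [pow_succ, pow_succ]; exact Ideal.mul_mono ih h

lemma prod_mem_pow {I : Ideal (MvPolynomial V K)} (s : Finset V) (g : V → MvPolynomial V K)
    (h : ∀ a ∈ s, g a ∈ I) : ∏ a ∈ s, g a ∈ I ^ s.card := by
  classical
  induction s using Finset.induction_on with
  | empty => simp [Ideal.one_eq_top]
  | @insert a s ha ih =>
      rw [Finset.prod_insert ha, Finset.card_insert_of_notMem ha, pow_succ, mul_comm (g a)]
      exact Ideal.mul_mem_mul (ih fun b hb => h b (Finset.mem_insert_of_mem hb))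
        (h a (Finset.mem_insert_self a s))

lemma prod_X_eq_monomial (s : Finset V) :
    (∏ v ∈ s, (X v : MvPolynomial V K)) = monomial (∑ v ∈ s, Finsupp.single v 1) 1 := by
  classical
  induction s using Finset.induction_on with
  | empty => simp
  | @insert a s ha ih =>
      rw [Finset.prod_insert ha, Finset.sum_insert ha, ih, MvPolynomial.X,
        MvPolynomial.monomial_mul, one_mul]

lemma cdeg_sum (C : Set V) {α : Type} (s : Finset α) (g : α → (V →₀ ℕ)) :
    cdeg C (∑ a ∈ s, g a) = ∑ a ∈ s, cdeg C (g a) := by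
  classical
  induction s using Finset.induction_on with
  | empty => simp [cdeg]
  | @insert a s ha ih => rw [Finset.sum_insert ha, Finset.sum_insert ha, cdeg_add, ih]

lemma edgeIdeal_le_Pc {G : SimpleGraph V} {C : Set V}
    (hcov : ∀ u v, G.Adj u v → u ∈ C ∨ v ∈ C) :
    edgeIdeal K G ≤ Pc K C := by
  rw [edgeIdeal, Ideal.span_le]
  rintro _ ⟨u, v, huv, rfl⟩
  rcases hcov u v huv with h | h
  · exact Ideal.mul_mem_right _ _ (X_mem_Pc h)
  · exact Ideal.mul_mem_left _ _ (X_mem_Pc h)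

lemma minimal_struct {G : SimpleGraph V} {p : Ideal (MvPolynomial V K)}
    (hp : p ∈ (edgeIdeal K G).minimalPrimes) :
    p = Pc K {v | (X v : MvPolynomial V K) ∈ p} ∧
      (∀ u v, G.Adj u v → (X u : MvPolynomial V K) ∈ p ∨ (X v : MvPolynomial V K) ∈ p) ∧
      (∀ c, (X c : MvPolynomial V K) ∈ p → ∃ u, (X u : MvPolynomial V K) ∉ p ∧ G.Adj c u) := by
  obtain ⟨⟨hprime, hIle⟩, hmin⟩ := hp
  set C := {v | (X v : MvPolynomial V K) ∈ p} with hC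
  have hcov : ∀ u v, G.Adj u v → (X u : MvPolynomial V K) ∈ p ∨ (X v : MvPolynomial V K) ∈ p :=
    fun u v huv => hprime.mem_or_mem (hIle (Ideal.subset_span ⟨u, v, huv, rfl⟩))
  have hPcle : Pc K C ≤ p := by
    rw [Pc, Ideal.span_le]
    rintro _ ⟨v, hv, rfl⟩
    exact hv
  have hIPc : edgeIdeal K G ≤ Pc K C := edgeIdeal_le_Pc hcov
  have heq : p = Pc K C := le_antisymm (hmin ⟨Pc_prime C, hIPc⟩ hPcle) hPcle
  refine ⟨heq, hcov, ?_⟩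
  intro c hc
  by_contra hno
  push_neg at hno
  set C' := C \ {c} with hC'
  have hcov' : ∀ u v, G.Adj u v → u ∈ C' ∨ v ∈ C' := by
    have key : ∀ u v, G.Adj u v → (X u : MvPolynomial V K) ∈ p → u ∈ C' ∨ v ∈ C' := by
      intro u v huv hu
      by_cases huc : u = c
      · subst huc
        have hv : (X v : MvPolynomial V K) ∈ p := by
          by_contra hvp
          exact (hno v hvp) huv
        exact Or.inr ⟨hv, fun hvc => G.ne_of_adj huv.symm (by rw [Set.mem_singleton_iff] at hvc; rw [hvc])⟩
      · exact Or.inl ⟨hu, fun h => huc (Set.mem_singleton_iff.mp h)⟩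
    intro u v huv
    rcases hcov u v huv with h | h
    · exact key u v huv h
    · exact (key v u huv.symm h).symm
  have hle' : p ≤ Pc K C' := by
    refine hmin ⟨Pc_prime C', edgeIdeal_le_Pc hcov'⟩ ?_
    refine le_trans ?_ hPcle
    exact Ideal.span_mono (Set.image_mono Set.diff_subset)
  have hXc : (X c : MvPolynomial V K) ∈ Jdeg (K := K) C' 1 := Pc_le_Jdeg_one C' (hle' hc)
  have := hXc (Finsupp.single c 1) (by rw [MvPolynomial.support_X]; simp)
  rw [cdeg_single, if_neg (fun h => h.2 rfl)] at this
  omega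

lemma exists_multiplier {G : SimpleGraph V} {C : Set V}
    (hminp : ∀ c ∈ C, ∃ u, u ∉ C ∧ G.Adj c u) :
    ∀ (k : ℕ) (f : MvPolynomial V K), f ∈ Pc K C ^ k →
      ∃ s, s ∉ Pc K C ∧ s * f ∈ edgeIdeal K G ^ k := by
  have hone : (1 : MvPolynomial V K) ∉ Pc K C := (Ideal.ne_top_iff_one _).mp (Pc_prime C).ne_top
  have hbase : ∀ a ∈ Pc K C, ∃ s, s ∉ Pc K C ∧ s * a ∈ edgeIdeal K G := by
    intro a ha
    refine Submodule.span_induction ?_ ?_ ?_ ?_ ha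
    · rintro _ ⟨c, hcC, rfl⟩
      obtain ⟨u, huC, hadj⟩ := hminp c hcC
      exact ⟨X u, X_not_mem_Pc huC, Ideal.subset_span ⟨u, c, hadj.symm, rfl⟩⟩
    · exact ⟨1, hone, by simp⟩
    · rintro x y _ _ ⟨s₁, hs₁, h₁⟩ ⟨s₂, hs₂, h₂⟩
      refine ⟨s₁ * s₂, fun h => ((Pc_prime C).mem_or_mem h).elim hs₁ hs₂, ?_⟩
      have : s₁ * s₂ * (x + y) = s₂ * (s₁ * x) + s₁ * (s₂ * y) := by ring
      rw [this]
      exact Ideal.add_mem _ (Ideal.mul_mem_left _ _ h₁) (Ideal.mul_mem_left _ _ h₂)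
    · rintro c x _ ⟨s, hs, h⟩
      refine ⟨s, hs, ?_⟩
      have : s * (c • x) = c * (s * x) := by simp only [smul_eq_mul]; ring
      rw [this]
      exact Ideal.mul_mem_left _ _ h
  intro k
  induction k with
  | zero =>
      intro f _
      exact ⟨1, hone, by simp [Ideal.one_eq_top]⟩
  | succ n ih =>
      intro f hf
      rw [pow_succ] at hf
      refine Submodule.mul_induction_on hf ?_ ?_
      · intro a ha b hb
        obtain ⟨sa, hsa, hsaa⟩ := ih a ha
        obtain ⟨sb, hsb, hsbb⟩ := hbase b hb
        refine ⟨sa * sb, fun h => ((Pc_prime C).mem_or_mem h).elim hsa hsb, ?_⟩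
        have : sa * sb * (a * b) = sa * a * (sb * b) := by ring
        rw [this, pow_succ]
        exact Ideal.mul_mem_mul hsaa hsbb
      · rintro x y ⟨sx, hsx, hx'⟩ ⟨sy, hsy, hy'⟩
        refine ⟨sx * sy, fun h => ((Pc_prime C).mem_or_mem h).elim hsx hsy, ?_⟩
        have : sx * sy * (x + y) = sy * (sx * x) + sx * (sy * y) := by ring
        rw [this]
        exact Ideal.add_mem _ (Ideal.mul_mem_left _ _ hx') (Ideal.mul_mem_left _ _ hy')

end SCProof2

open EdgeIdealReg in
/-- If `x₁` is a simplicial vertex of `G` with closed neighborhood `B`, then for all `r ≥ 1`,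
`(I(G)^{(r)} : x_B) = I(G)^{(r - |B| + 1)}`, with the convention `I^{(k)} = S` for `k ≤ 0`. -/
theorem symbolic_colon_closed_neighborhood {V K : Type} [Field K] [Fintype V] [DecidableEq V]
    (G : SimpleGraph V) (x₁ : V) (hsimp : G.IsClique (G.neighborSet x₁))
    (B : Finset V) (hB : (B : Set V) = insert x₁ (G.neighborSet x₁)) (r : ℕ) (hr : 1 ≤ r) :
    Submodule.colon (symbolicPower (edgeIdeal K G) r)
        (Ideal.span {∏ v ∈ B, (X v : MvPolynomial V K)}) =
      symbolicPowerZ (edgeIdeal K G) ((r : ℤ) - B.card + 1) := by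
  classical
  open SCProof SCProof2 in
  set I := edgeIdeal K G with hI
  have hx₁B : x₁ ∈ B := by
    rw [← Finset.mem_coe, hB]; exact Set.mem_insert _ _
  have hBpos : 1 ≤ B.card := Finset.card_pos.mpr ⟨x₁, hx₁B⟩
  have hclique : ∀ a ∈ B, ∀ b ∈ B, a ≠ b → G.Adj a b := by
    intro a ha b hb hab
    rw [← Finset.mem_coe, hB] at ha hb
    rcases ha with rfl | ha
    · rcases hb with rfl | hb
      · exact absurd rfl hab
      · exact hb
    · rcases hb with rfl | hb
      · exact ((SimpleGraph.mem_neighborSet _ _ _).mp ha).symm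
      · exact hsimp ha hb hab
  have keyC : ∀ p ∈ I.minimalPrimes, ∃ u ∈ B, (X u : MvPolynomial V K) ∉ p ∧
      ∀ v ∈ B, v ≠ u → (X v : MvPolynomial V K) ∈ p := by
    intro p hp
    obtain ⟨hpeq, hcov, hminp⟩ := minimal_struct hp
    have hex : ∃ u ∈ B, (X u : MvPolynomial V K) ∉ p := by
      by_contra hall
      push_neg at hall
      obtain ⟨u, hu, hadj⟩ := hminp x₁ (hall x₁ hx₁B)
      have huB : u ∈ B := by
        rw [← Finset.mem_coe, hB]
        exact Set.mem_insert_of_mem _ ((SimpleGraph.mem_neighborSet _ _ _).mpr hadj)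
      exact hu (hall u huB)
    obtain ⟨u, huB, hup⟩ := hex
    exact ⟨u, huB, hup, fun v hv hne =>
      (hcov v u (hclique v hv u huB hne)).resolve_right hup⟩
  have hxB : ∀ u ∈ B, (X u : MvPolynomial V K) ^ (B.card - 1) * ∏ v ∈ B, X v
      = X u * ∏ v ∈ B.erase u, (X v * X u) := by
    intro u hu
    rw [Finset.prod_mul_distrib, Finset.prod_const, Finset.card_erase_of_mem hu,
      ← Finset.mul_prod_erase B _ hu]
    ring
  have hs1 : ∀ u ∈ B, (X u : MvPolynomial V K) ^ (B.card - 1) * ∏ v ∈ B, X v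
      ∈ I ^ (B.card - 1) := by
    intro u hu
    rw [hxB u hu]
    refine Ideal.mul_mem_left _ _ ?_
    have hmem : ∀ v ∈ B.erase u, (X v * X u : MvPolynomial V K) ∈ I := by
      intro v hv
      exact Ideal.subset_span ⟨v, u,
        hclique v (Finset.mem_of_mem_erase hv) u hu (Finset.ne_of_mem_erase hv), rfl⟩
    have := prod_mem_pow (I := I) (B.erase u) (fun v => X v * X u) hmem
    rwa [Finset.card_erase_of_mem hu] at this
  rcases le_or_gt ((r : ℤ) - B.card + 1) 0 with hneg | hpos
  · rw [symbolicPowerZ, if_pos hneg, eq_top_iff]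
    intro f _
    rw [Ideal.mem_colon_span_singleton]
    intro p hp
    obtain ⟨u, huB, hup, _⟩ := keyC p hp
    refine ⟨X u ^ (B.card - 1), fun h => hup (hp.1.1.mem_of_pow_mem _ h), ?_⟩
    have hrw : (X u : MvPolynomial V K) ^ (B.card - 1) * (f * ∏ v ∈ B, X v)
        = f * (X u ^ (B.card - 1) * ∏ v ∈ B, X v) := by ring
    rw [hrw]
    have h1 : f * ((X u : MvPolynomial V K) ^ (B.card - 1) * ∏ v ∈ B, X v)
        ∈ I ^ (B.card - 1) := Ideal.mul_mem_left _ _ (hs1 u huB)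
    exact Ideal.pow_le_pow_right (by omega) h1
  · have hbr : B.card ≤ r := by omega
    have htoNat : ((r : ℤ) - B.card + 1).toNat = r - B.card + 1 := by omega
    rw [symbolicPowerZ, if_neg (by omega), htoNat]
    set k := r - B.card + 1 with hk
    ext f
    rw [Ideal.mem_colon_span_singleton]
    constructor
    · intro hf p hp
      obtain ⟨hpeq, hcov, hminp⟩ := minimal_struct hp
      set C := {v | (X v : MvPolynomial V K) ∈ p} with hC
      obtain ⟨u, huB, hup, hother⟩ := keyC p hp
      obtain ⟨s, hs, hsf⟩ := hf p hp
      have hcovC : ∀ a b, G.Adj a b → a ∈ C ∨ b ∈ C := fun a b hab => hcov a b hab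
      have hIJ : I ^ r ≤ Jdeg (K := K) C r :=
        le_trans (pow_mono (edgeIdeal_le_Pc hcovC) r) (pow_Pc_le_Jdeg C r)
      have h1 : s ∉ Jdeg (K := K) C 1 := by
        intro h
        apply hs
        rw [hpeq]
        have := Jdeg_le_pow C 1 h
        rwa [pow_one] at this
      have h2 : f * ∏ v ∈ B, X v ∈ Jdeg (K := K) C r :=
        mul_mem_Jdeg_cancel h1 (hIJ hsf)
      have hcdegB : cdeg C (∑ v ∈ B, Finsupp.single v 1) = B.card - 1 := by
        rw [cdeg_sum, ← Finset.add_sum_erase _ _ huB, cdeg_single,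
          if_neg (show u ∉ C from hup), zero_add,
          Finset.sum_congr rfl (fun v hv => by
            rw [cdeg_single, if_pos (show v ∈ C from hother v (Finset.mem_of_mem_erase hv)
              (Finset.ne_of_mem_erase hv))]),
          Finset.sum_const, Finset.card_erase_of_mem huB, smul_eq_mul, mul_one]
      have h3 : f ∈ Jdeg (K := K) C k := by
        intro m hm
        have hne : MvPolynomial.coeff ((∑ v ∈ B, Finsupp.single v 1) + m)
            (f * ∏ v ∈ B, X v) ≠ 0 := by
          rw [prod_X_eq_monomial, mul_comm, MvPolynomial.coeff_monomial_mul, one_mul]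
          exact MvPolynomial.mem_support_iff.mp hm
        have := h2 _ (MvPolynomial.mem_support_iff.mpr hne)
        rw [cdeg_add, hcdegB] at this
        omega
      have h4 : f ∈ Pc K C ^ k := Jdeg_le_pow C k h3
      have hminp' : ∀ c ∈ C, ∃ w, w ∉ C ∧ G.Adj c w := fun c hc => hminp c hc
      obtain ⟨s', hs', hs'f⟩ := exists_multiplier hminp' k f h4
      exact ⟨s', fun h => hs' (by rwa [← hpeq]), hs'f⟩
    · intro hf p hp
      obtain ⟨u, huB, hup, _⟩ := keyC p hp
      obtain ⟨t, ht, htf⟩ := hf p hp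
      refine ⟨X u ^ (B.card - 1) * t, ?_, ?_⟩
      · intro h
        rcases hp.1.1.mem_or_mem h with h | h
        · exact hup (hp.1.1.mem_of_pow_mem _ h)
        · exact ht h
      · have hmul : (X u : MvPolynomial V K) ^ (B.card - 1) * t * (f * ∏ v ∈ B, X v)
            = (X u ^ (B.card - 1) * ∏ v ∈ B, X v) * (t * f) := by ring
        rw [hmul]
        have := Ideal.mul_mem_mul (hs1 u huB) htf
        rwa [← pow_add, show B.card - 1 + k = r by omega] at this
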